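/- Let r ∈ ℕ, let Γ be a group, let w be a word on k letters, and let 𝒩 be a nonprincipal ultrafilter on ℕ. Assume that for every n ∈ ℕ, Δₙ and Λₙ are subgroups of Γ with Δₙ normal in Λₙ, Δₙ contained in the verbal subgroup (Λₙ)_w, and width_w(Λₙ/Δₙ) ≤ r. Let Γ* be the ultrapower of Γ over 𝒩 and let Λ* and Δ* be the ultraproducts of the Λₙ's and the Δₙ's inside Γ*. Then the index [Δ* : (Λ*)_w ∩ Δ*] is finite if and only if there exists s ∈ ℕ such that {n ∈ ℕ : width_w(Λₙ) ≤ s} ∈ 𝒩. -/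

import Mathlib

open Pointwise

/-- The verbal subset of a word `w` on `k` letters in a group `G`:
all values `w(g₁,…,g_k)^{±1}`. -/
def wordSet {k : ℕ} (w : FreeGroup (Fin k)) (G : Type*) [Group G] : Set G :=
  {x | ∃ g : Fin k → G, x = FreeGroup.lift g w ∨ x = (FreeGroup.lift g w)⁻¹}

/-- `widthLE w G s` : every element of the verbal subgroup `G_w` is a product of
at most `s` elements of the verbal subset `w(G)` (note `1 ∈ w(G)`). -/
def widthLE {k : ℕ} (w : FreeGroup (Fin k)) (G : Type*) [Group G] (s : ℕ) : Prop :=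
  ((Subgroup.closure (wordSet w G) : Subgroup G) : Set G) ⊆ wordSet w G ^ s

/-- The verbal subgroup of a subgroup `H ≤ G` relative to the word `w`, as a subgroup
of `G`: generated by the values of `w` on tuples from `H`. -/
def verbalIn {k : ℕ} {G : Type*} [Group G] (w : FreeGroup (Fin k)) (H : Subgroup G) :
    Subgroup G :=
  Subgroup.closure {x | ∃ g : Fin k → G, (∀ i, g i ∈ H) ∧ x = FreeGroup.lift g w}

/-- The ultraproduct of a sequence of subgroups `H n ≤ Γ` inside the ultrapower
(the group of germs) of `Γ` along an ultrafilter `𝒩`. -/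
def ultraSubgroup {Γ : Type*} [Group Γ] (𝒩 : Ultrafilter ℕ) (H : ℕ → Subgroup Γ) :
    Subgroup ((𝒩 : Filter ℕ).Germ Γ) where
  carrier := {x | ∃ f : ℕ → Γ, (∀ᶠ n in (𝒩 : Filter ℕ), f n ∈ H n) ∧
    x = Filter.Germ.ofFun f}
  one_mem' := ⟨1, Filter.Eventually.of_forall fun n => one_mem _,
    (Filter.Germ.coe_one (l := (𝒩 : Filter ℕ))).symm⟩
  mul_mem' := by
    rintro x y ⟨f, hf, rfl⟩ ⟨g, hg, rfl⟩
    refine ⟨f * g, ?_, (Filter.Germ.coe_mul f g).symm⟩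
    filter_upwards [hf, hg] with n h1 h2 using mul_mem h1 h2
  inv_mem' := by
    rintro x ⟨f, hf, rfl⟩
    refine ⟨f⁻¹, ?_, (Filter.Germ.coe_inv f).symm⟩
    filter_upwards [hf] with n h using inv_mem h

section helpers
variable {k : ℕ} (w : FreeGroup (Fin k)) {G H : Type*} [Group G] [Group H]

lemma lift_comp_apply (f : G →* H) (g : Fin k → G) :
    f (FreeGroup.lift g w) = FreeGroup.lift (f ∘ g) w := by
  have : f.comp (FreeGroup.lift g) = FreeGroup.lift (f ∘ g) := by
    apply FreeGroup.ext_hom; intro a; simp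
  exact DFunLike.congr_fun this w

lemma one_mem_wordSet : (1 : G) ∈ wordSet w G := by
  refine ⟨fun _ => 1, Or.inl ?_⟩
  have : FreeGroup.lift (fun _ : Fin k => (1:G)) = 1 := by
    apply FreeGroup.ext_hom; intro a; simp
  rw [this]; rfl

lemma inv_mem_pow_of {s : Set G} (hs : ∀ x ∈ s, x⁻¹ ∈ s) {x : G} {m : ℕ}
    (hx : x ∈ s ^ m) : x⁻¹ ∈ s ^ m := by
  induction m generalizing x with
  | zero => simp_all
  | succ n ih =>
      rw [pow_succ] at hx
      obtain ⟨a, ha, b, hb, rfl⟩ := hx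
      rw [pow_succ', mul_inv_rev]
      exact Set.mul_mem_mul (hs b hb) (ih ha)

lemma inv_mem_wordSet {x : G} (hx : x ∈ wordSet w G) : x⁻¹ ∈ wordSet w G := by
  obtain ⟨g, hg | hg⟩ := hx
  · exact ⟨g, Or.inr (by rw [hg])⟩
  · exact ⟨g, Or.inl (by rw [hg, inv_inv])⟩

lemma inv_mem_wordSet_pow {x : G} {m : ℕ} (hx : x ∈ wordSet w G ^ m) :
    x⁻¹ ∈ wordSet w G ^ m :=
  inv_mem_pow_of (fun _ hy => inv_mem_wordSet w hy) hx

lemma pow_subset_subgroup {s : Set G} {K : Subgroup G} (hs : s ⊆ K) (m : ℕ) :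
    s ^ m ⊆ K := by
  induction m with
  | zero => simpa [Set.subset_def] using one_mem K
  | succ n ih =>
      rw [pow_succ]
      rintro x ⟨a, ha, b, hb, rfl⟩
      exact mul_mem (ih ha) (hs hb)

lemma mem_closure_wordSet_iff {x : G} :
    x ∈ Subgroup.closure (wordSet w G) ↔ ∃ m, x ∈ wordSet w G ^ m := by
  constructor
  · intro hx
    induction hx using Subgroup.closure_induction with
    | mem y hy => exact ⟨1, by simpa using hy⟩
    | one => exact ⟨0, by simp⟩
    | mul a b _ _ iha ihb =>
        obtain ⟨m, hm⟩ := iha; obtain ⟨m', hm'⟩ := ihb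
        exact ⟨m + m', by rw [pow_add]; exact Set.mul_mem_mul hm hm'⟩
    | inv a _ iha =>
        obtain ⟨m, hm⟩ := iha
        exact ⟨m, inv_mem_wordSet_pow w hm⟩
  · rintro ⟨m, hm⟩
    exact pow_subset_subgroup (Subgroup.subset_closure) m hm

lemma image_pow (f : G →* H) (s : Set G) (m : ℕ) : f '' (s ^ m) = (f '' s) ^ m := by
  induction m with
  | zero => simp [Set.image_singleton, Set.singleton_one]
  | succ n ih => rw [pow_succ, pow_succ, Set.image_mul, ih]

lemma image_wordSet_surjective {f : G →* H} (hf : Function.Surjective f) :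
    f '' wordSet w G = wordSet w H := by
  ext x
  constructor
  · rintro ⟨y, ⟨g, hg | hg⟩, rfl⟩
    · exact ⟨f ∘ g, Or.inl (by rw [hg, lift_comp_apply])⟩
    · exact ⟨f ∘ g, Or.inr (by rw [hg, map_inv, lift_comp_apply])⟩
  · rintro ⟨g, hg | hg⟩
    · choose g' hg' using fun i => hf (g i)
      refine ⟨FreeGroup.lift g' w, ⟨g', Or.inl rfl⟩, ?_⟩
      rw [hg, lift_comp_apply]; congr 1; ext i; simp [hg']
    · choose g' hg' using fun i => hf (g i)
      refine ⟨(FreeGroup.lift g' w)⁻¹, ⟨g', Or.inr rfl⟩, ?_⟩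
      rw [hg, map_inv, lift_comp_apply]; congr 2; ext i; simp [hg']

lemma key_elem (r : ℕ) (N : Subgroup G) [hn : N.Normal]
    (hq : widthLE w (G ⧸ N) r) {t : ℕ}
    (hx : ∃ x ∈ Subgroup.closure (wordSet w G), x ∉ wordSet w G ^ t) :
    ∃ d : G, d ∈ N ∧ d ∈ wordSet w G ^ (t + r) ∧
      ∀ j, j + r < t → d ∉ wordSet w G ^ j := by
  obtain ⟨x, hxc, hxt⟩ := hx
  set s := wordSet w G with hs
  have hne : {m | x ∈ s ^ m}.Nonempty := (mem_closure_wordSet_iff w).1 hxc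
  set N₀ := sInf {m | x ∈ s ^ m} with hN₀
  have hxN₀ : x ∈ s ^ N₀ := Nat.sInf_mem hne
  have hmin : ∀ j < N₀, x ∉ s ^ j := fun j hj => Nat.notMem_of_lt_sInf hj
  have htN₀ : t < N₀ := by
    by_contra h
    exact hxt (Set.pow_subset_pow_right (one_mem_wordSet w) (not_lt.1 h) hxN₀)
  have : x ∈ s ^ t * s ^ (N₀ - t) := by
    rw [← pow_add, Nat.add_sub_cancel' htN₀.le]; exact hxN₀
  obtain ⟨p, hp, q, hq', rfl⟩ := this
  have hpmin : ∀ j < t, p ∉ s ^ j := by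
    intro j hj hpj
    have : p * q ∈ s ^ (j + (N₀ - t)) := by
      rw [pow_add]; exact Set.mul_mem_mul hpj hq'
    exact hmin _ (by omega) this
  set π := QuotientGroup.mk' N with hπ
  have hπs : Function.Surjective π := QuotientGroup.mk'_surjective N
  have hπp : π p ∈ Subgroup.closure (wordSet w (G ⧸ N)) := by
    rw [← image_wordSet_surjective w hπs, ← MonoidHom.map_closure]
    exact ⟨p, pow_subset_subgroup Subgroup.subset_closure t hp, rfl⟩
  have : π p ∈ (π '' s) ^ r := by
    rw [image_wordSet_surjective w hπs]; exact hq hπp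
  rw [← image_pow] at this
  obtain ⟨u, hu, huv⟩ := this
  refine ⟨u⁻¹ * p, ?_, ?_, ?_⟩
  · have : π (u⁻¹ * p) = 1 := by rw [map_mul, map_inv, huv, inv_mul_cancel]
    rwa [← QuotientGroup.ker_mk' N, MonoidHom.mem_ker]
  · have : u⁻¹ * p ∈ s ^ r * s ^ t :=
      Set.mul_mem_mul (inv_mem_wordSet_pow w hu) hp
    rw [← pow_add] at this
    rwa [Nat.add_comm] at this
  · intro j hj hdj
    have : p ∈ s ^ (r + j) := by
      have : u * (u⁻¹ * p) ∈ s ^ r * s ^ j := Set.mul_mem_mul hu hdj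
      rwa [← pow_add, mul_inv_cancel_left] at this
    exact hpmin _ (by omega) this

end helpers

/-! ### Germ-level lemmas -/

section germs
variable {k : ℕ} (w : FreeGroup (Fin k)) {Γ : Type*} [Group Γ] (𝒩 : Ultrafilter ℕ)

/-- The verbal subset of a subgroup `Λ ≤ Γ`, as a subset of `Γ`. -/
def SG (Λ : Subgroup Γ) : Set Γ :=
  {x | ∃ g : Fin k → Γ, (∀ i, g i ∈ Λ) ∧
    (x = FreeGroup.lift g w ∨ x = (FreeGroup.lift g w)⁻¹)}

lemma SG_eq_image (Λ : Subgroup Γ) : SG w Λ = Λ.subtype '' wordSet w ↥Λ := by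
  ext x
  constructor
  · rintro ⟨g, hg, hx | hx⟩
    · refine ⟨FreeGroup.lift (fun i => (⟨g i, hg i⟩ : ↥Λ)) w,
        ⟨fun i => ⟨g i, hg i⟩, Or.inl rfl⟩, ?_⟩
      have hc : Λ.subtype ∘ (fun i => (⟨g i, hg i⟩ : ↥Λ)) = g := rfl
      rw [hx, lift_comp_apply w Λ.subtype, hc]
    · refine ⟨(FreeGroup.lift (fun i => (⟨g i, hg i⟩ : ↥Λ)) w)⁻¹,
        ⟨fun i => ⟨g i, hg i⟩, Or.inr rfl⟩, ?_⟩
      have hc : Λ.subtype ∘ (fun i => (⟨g i, hg i⟩ : ↥Λ)) = g := rfl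
      rw [hx, map_inv, lift_comp_apply w Λ.subtype, hc]
  · rintro ⟨y, ⟨g, hy | hy⟩, rfl⟩
    · exact ⟨fun i => ↑(g i), fun i => (g i).2,
        Or.inl (by rw [hy, lift_comp_apply]; rfl)⟩
    · exact ⟨fun i => ↑(g i), fun i => (g i).2,
        Or.inr (by rw [hy, map_inv, lift_comp_apply]; rfl)⟩

lemma inv_mem_SG {Λ : Subgroup Γ} {x : Γ} (hx : x ∈ SG w Λ) : x⁻¹ ∈ SG w Λ := by
  obtain ⟨g, hg, hx | hx⟩ := hx
  · exact ⟨g, hg, Or.inr (by rw [hx])⟩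
  · exact ⟨g, hg, Or.inl (by rw [hx, inv_inv])⟩

lemma germ_lift (g : Fin k → (ℕ → Γ)) :
    (Filter.Germ.ofFun (fun n => FreeGroup.lift (fun j => g j n) w) :
      (𝒩 : Filter ℕ).Germ Γ) =
      FreeGroup.lift (fun j => Filter.Germ.ofFun (g j)) w := by
  have h1 : (fun n => FreeGroup.lift (fun j => g j n) w) = FreeGroup.lift g w := by
    funext n
    exact (lift_comp_apply w (Pi.evalMonoidHom (fun _ => Γ) n) g).symm
  have h2 : (Filter.Germ.coeMulHom (𝒩 : Filter ℕ)).comp (FreeGroup.lift g) =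
      FreeGroup.lift (fun j => (Filter.Germ.ofFun (g j) : (𝒩 : Filter ℕ).Germ Γ)) := by
    apply FreeGroup.ext_hom; intro a; simp [Filter.Germ.coeMulHom]; rfl
  rw [h1]
  exact DFunLike.congr_fun h2 w

lemma mem_verbal_of_values {Λ : ℕ → Subgroup Γ} {v : ℕ → Γ}
    (hv : ∀ᶠ n in (𝒩 : Filter ℕ), ∃ g : Fin k → Γ, (∀ i, g i ∈ Λ n) ∧
      v n = FreeGroup.lift g w) :
    (Filter.Germ.ofFun v : (𝒩 : Filter ℕ).Germ Γ) ∈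
      verbalIn w (ultraSubgroup 𝒩 Λ) := by
  have hch : ∀ n, ∃ g : Fin k → Γ, (∀ i, g i ∈ Λ n) ∧
      ((∃ g' : Fin k → Γ, (∀ i, g' i ∈ Λ n) ∧ v n = FreeGroup.lift g' w) →
        v n = FreeGroup.lift g w) := by
    intro n
    by_cases h : ∃ g' : Fin k → Γ, (∀ i, g' i ∈ Λ n) ∧ v n = FreeGroup.lift g' w
    · obtain ⟨g, hg1, hg2⟩ := h
      exact ⟨g, hg1, fun _ => hg2⟩
    · exact ⟨fun _ => 1, fun _ => one_mem _, fun hc => absurd hc h⟩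
  choose g hg1 hg2 using hch
  have heq : (Filter.Germ.ofFun v : (𝒩 : Filter ℕ).Germ Γ) =
      Filter.Germ.ofFun (fun n => FreeGroup.lift (fun j => g n j) w) := by
    apply Filter.Germ.coe_eq.2
    filter_upwards [hv] with n hn using hg2 n hn
  rw [heq, germ_lift]
  apply Subgroup.subset_closure
  exact ⟨fun j => Filter.Germ.ofFun (fun n => g n j),
    fun j => ⟨fun n => g n j, Filter.Eventually.of_forall (fun n => hg1 n j), rfl⟩, rfl⟩

lemma eventually_mul_decomp {l : Filter ℕ} {S T : ℕ → Set Γ} {f : ℕ → Γ}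
    (hf : ∀ᶠ n in l, f n ∈ S n * T n) :
    ∃ a b : ℕ → Γ, (∀ᶠ n in l, a n ∈ S n) ∧ (∀ᶠ n in l, b n ∈ T n) ∧
      ∀ᶠ n in l, f n = a n * b n := by
  have hch : ∀ n, ∃ p : Γ × Γ, f n ∈ S n * T n →
      (p.1 ∈ S n ∧ p.2 ∈ T n ∧ f n = p.1 * p.2) := by
    intro n
    by_cases h : f n ∈ S n * T n
    · obtain ⟨a, ha, b, hb, hab⟩ := h
      exact ⟨(a, b), fun _ => ⟨ha, hb, hab.symm⟩⟩
    · exact ⟨(1, 1), fun hc => absurd hc h⟩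
  choose p hp using hch
  exact ⟨fun n => (p n).1, fun n => (p n).2,
    hf.mono fun n hn => ((hp n) hn).1,
    hf.mono fun n hn => ((hp n) hn).2.1,
    hf.mono fun n hn => ((hp n) hn).2.2⟩

lemma mem_verbal_of_eventually_pow {Λ : ℕ → Subgroup Γ} {f : ℕ → Γ} {m : ℕ}
    (hf : ∀ᶠ n in (𝒩 : Filter ℕ), f n ∈ SG w (Λ n) ^ m) :
    (Filter.Germ.ofFun f : (𝒩 : Filter ℕ).Germ Γ) ∈
      verbalIn w (ultraSubgroup 𝒩 Λ) := by
  induction m generalizing f with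
  | zero =>
      have : (Filter.Germ.ofFun f : (𝒩 : Filter ℕ).Germ Γ) = 1 := by
        rw [← Filter.Germ.coe_one]
        apply Filter.Germ.coe_eq.2
        filter_upwards [hf] with n hn
        simpa using hn
      rw [this]; exact one_mem _
  | succ m ih =>
      simp only [pow_succ] at hf
      obtain ⟨a, b, ha, hb, hab⟩ := eventually_mul_decomp hf
      have heq : (Filter.Germ.ofFun f : (𝒩 : Filter ℕ).Germ Γ) =
          Filter.Germ.ofFun a * Filter.Germ.ofFun b := by
        rw [← Filter.Germ.coe_mul]
        exact Filter.Germ.coe_eq.2 hab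
      rw [heq]
      refine mul_mem (ih ha) ?_
      set E := {n | ∃ g : Fin k → Γ, (∀ i, g i ∈ Λ n) ∧ b n = FreeGroup.lift g w}
        with hE
      rcases (𝒩.mem_or_compl_mem E) with hEm | hEm
      · exact mem_verbal_of_values w 𝒩 hEm
      · have hv : ∀ᶠ n in (𝒩 : Filter ℕ), ∃ g : Fin k → Γ, (∀ i, g i ∈ Λ n) ∧
            (b n)⁻¹ = FreeGroup.lift g w := by
          filter_upwards [hb, hEm] with n hn hnE
          obtain ⟨g, hg, h1 | h1⟩ := hn
          · exact absurd ⟨g, hg, h1⟩ hnE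
          · exact ⟨g, hg, by rw [h1, inv_inv]⟩
        have hbb : (Filter.Germ.ofFun b : (𝒩 : Filter ℕ).Germ Γ) =
            (Filter.Germ.ofFun (fun n => (b n)⁻¹))⁻¹ := by
          rw [← Filter.Germ.coe_inv]
          apply Filter.Germ.coe_eq.2
          filter_upwards with n using (inv_inv (b n)).symm
        rw [hbb]
        exact inv_mem (mem_verbal_of_values w 𝒩 hv)

lemma exists_of_mem_verbal {Λ : ℕ → Subgroup Γ} {x : (𝒩 : Filter ℕ).Germ Γ}
    (hx : x ∈ verbalIn w (ultraSubgroup 𝒩 Λ)) :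
    ∃ m, ∃ f : ℕ → Γ, (∀ᶠ n in (𝒩 : Filter ℕ), f n ∈ SG w (Λ n) ^ m) ∧
      x = Filter.Germ.ofFun f := by
  induction hx using Subgroup.closure_induction with
  | mem y hy =>
      obtain ⟨g, hg, rfl⟩ := hy
      choose F hF1 hF2 using fun j => hg j
      refine ⟨1, fun n => FreeGroup.lift (fun j => F j n) w, ?_, ?_⟩
      · have : ∀ᶠ n in (𝒩 : Filter ℕ), ∀ j, F j n ∈ Λ n :=
          Filter.eventually_all.2 hF1
        filter_upwards [this] with n hn
        rw [pow_one]
        exact ⟨fun j => F j n, hn, Or.inl rfl⟩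
      · rw [germ_lift]
        have hgeq : g = fun j => (Filter.Germ.ofFun (F j) : (𝒩 : Filter ℕ).Germ Γ) :=
          funext hF2
        rw [hgeq]
  | one => exact ⟨0, 1, Filter.Eventually.of_forall (fun n => by simp), 
      (Filter.Germ.coe_one).symm⟩
  | mul a b _ _ iha ihb =>
      obtain ⟨m, f, hf, rfl⟩ := iha
      obtain ⟨m', f', hf', rfl⟩ := ihb
      refine ⟨m + m', f * f', ?_, (Filter.Germ.coe_mul f f').symm⟩
      filter_upwards [hf, hf'] with n h1 h2
      rw [pow_add]
      exact Set.mul_mem_mul h1 h2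
  | inv a _ iha =>
      obtain ⟨m, f, hf, rfl⟩ := iha
      refine ⟨m, f⁻¹, ?_, (Filter.Germ.coe_inv f).symm⟩
      filter_upwards [hf] with n h1
      exact inv_mem_pow_of (fun _ hy => inv_mem_SG w hy) h1

end germs

theorem stmt1 {Γ : Type*} [Group Γ] {k : ℕ} (w : FreeGroup (Fin k)) (r : ℕ)
    (𝒩 : Ultrafilter ℕ) (h𝒩 : ∀ n : ℕ, (𝒩 : Filter ℕ) ≠ pure n)
    (Λ Δ : ℕ → Subgroup Γ) (hle : ∀ n, Δ n ≤ Λ n)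
    (hnorm : ∀ n, ((Δ n).subgroupOf (Λ n)).Normal)
    (hΔw : ∀ n, (Δ n).subgroupOf (Λ n) ≤ Subgroup.closure (wordSet w ↥(Λ n)))
    (hqwidth : ∀ n, letI := hnorm n
      widthLE w (↥(Λ n) ⧸ (Δ n).subgroupOf (Λ n)) r) :
    (verbalIn w (ultraSubgroup 𝒩 Λ)).relIndex (ultraSubgroup 𝒩 Δ) ≠ 0 ↔
      ∃ s : ℕ, {n : ℕ | widthLE w ↥(Λ n) s} ∈ 𝒩 := by
  classical
  have hco : (𝒩 : Filter ℕ) ≤ Filter.cofinite := by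
    rcases 𝒩.le_cofinite_or_eq_pure with h | ⟨a, ha⟩
    · exact h
    · exact absurd (by rw [ha]; rfl) (h𝒩 a)
  constructor
  · -- hard direction: finite index implies bounded widths on an ultrafilter set
    intro hfin
    by_contra hno
    push_neg at hno
    apply hfin
    -- width is unbounded along 𝒩
    set Q : ℕ → ℕ → Prop := fun n t =>
      ∃ x ∈ Subgroup.closure (wordSet w ↥(Λ n)), x ∉ wordSet w ↥(Λ n) ^ t with hQdef
    have hQanti : ∀ n t t', t' ≤ t → Q n t → Q n t' := by
      rintro n t t' htt' ⟨x, hx1, hx2⟩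
      exact ⟨x, hx1, fun hc =>
        hx2 (Set.pow_subset_pow_right (one_mem_wordSet w) htt' hc)⟩
    have hQmem : ∀ t, {n | Q n t} ∈ 𝒩 := by
      intro t
      have h1 : {n | widthLE w ↥(Λ n) t}ᶜ ∈ 𝒩 :=
        (Ultrafilter.compl_mem_iff_notMem).2 (hno t)
      have h2 : {n | widthLE w ↥(Λ n) t}ᶜ ⊆ {n | Q n t} := by
        intro n hn
        have := Set.not_subset.1 hn
        obtain ⟨x, hx1, hx2⟩ := this
        exact ⟨x, hx1, hx2⟩
      exact Filter.mem_of_superset h1 h2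
    set M : ℕ → ℕ := fun n => if Q n n then n else sInf {t | ¬ Q n t} with hMdef
    have hQM : ∀ n t, t < M n → Q n t := by
      intro n t ht
      by_cases h : Q n n
      · simp only [hMdef, if_pos h] at ht
        exact hQanti n n t ht.le h
      · simp only [hMdef, if_neg h] at ht
        by_contra hc
        exact Nat.notMem_of_lt_sInf (s := {t | ¬ Q n t}) ht hc
    have hMlarge : ∀ t, ∀ᶠ n in (𝒩 : Filter ℕ), t ≤ M n := by
      intro t
      have h1 : {n : ℕ | t ≤ n} ∈ (𝒩 : Filter ℕ) :=
        hco ((Set.finite_lt_nat t).subset (fun n hn => by simpa using hn))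
      filter_upwards [h1, hQmem t] with n hn hq
      by_cases h : Q n n
      · simpa only [hMdef, if_pos h] using hn
      · simp only [hMdef, if_neg h]
        refine le_csInf (Set.nonempty_of_mem (show n ∈ {t | ¬ Q n t} from h)) (fun m hm => ?_)
        by_contra hc
        exact hm (hQanti n t m (le_of_not_ge hc) hq)
    -- construct elements of Δ n of prescribed approximate length
    have hkey : ∀ n t, Q n t → ∃ d : ↥(Λ n), d ∈ (Δ n).subgroupOf (Λ n) ∧
        d ∈ wordSet w ↥(Λ n) ^ (t + r) ∧
        ∀ j', j' + r < t → d ∉ wordSet w ↥(Λ n) ^ j' := by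
      intro n t h
      letI := hnorm n
      exact key_elem w r _ (hqwidth n) h
    choose! D hD1 hD2 hD3 using hkey
    set dd : ℕ → ℕ → Γ := fun j n =>
      if h : Q n (j * Nat.sqrt (M n)) then ((D n (j * Nat.sqrt (M n)) : ↥(Λ n)) : Γ)
      else 1 with hdd
    have hddΔ : ∀ j n, dd j n ∈ Δ n := by
      intro j n
      by_cases h : Q n (j * Nat.sqrt (M n))
      · simp only [hdd, dif_pos h]
        exact (Subgroup.mem_subgroupOf).1 (hD1 n _ h)
      · simp only [hdd, dif_neg h]
        exact one_mem _
    have hsep : ∀ i j : ℕ, i < j →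
        (Filter.Germ.ofFun (dd i) : (𝒩 : Filter ℕ).Germ Γ)⁻¹ *
          Filter.Germ.ofFun (dd j) ∉ verbalIn w (ultraSubgroup 𝒩 Λ) := by
      intro i j hij hmem
      obtain ⟨m, f, hfm, heq⟩ := exists_of_mem_verbal w 𝒩 hmem
      have heq2 : (fun n => (dd i n)⁻¹ * dd j n) =ᶠ[(𝒩 : Filter ℕ)] f := by
        apply Filter.Germ.coe_eq.1
        rw [← heq, ← Filter.Germ.coe_inv, ← Filter.Germ.coe_mul]
        rfl
      have hev : ∀ᶠ n in (𝒩 : Filter ℕ),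
          (dd i n)⁻¹ * dd j n ∈ SG w (Λ n) ^ m := by
        filter_upwards [heq2, hfm] with n h1 h2
        rw [h1]; exact h2
      set B := (j + m + 2 * r + 2) ^ 2 with hB
      obtain ⟨n, hn1, hn2⟩ := (hev.and (hMlarge B)).exists
      -- now derive contradiction at coordinate n
      set c := Nat.sqrt (M n) with hc
      have hcge : j + m + 2 * r + 2 ≤ c := by
        have := Nat.sqrt_le_sqrt hn2
        rwa [hB, pow_two, Nat.sqrt_eq] at this
      have hcc : c * c ≤ M n := Nat.sqrt_le (M n)
      have hQj : Q n (j * c) := by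
        apply hQM
        have h1 : (j + 1) * c ≤ c * c := Nat.mul_le_mul_right c (by omega)
        have h2 : 1 ≤ c := by omega
        nlinarith
      have hQi : Q n (i * c) := by
        apply hQM
        have h1 : (i + 1) * c ≤ c * c := Nat.mul_le_mul_right c (by omega)
        have h2 : 1 ≤ c := by omega
        nlinarith
      have hddj : dd j n = ((D n (j * c) : ↥(Λ n)) : Γ) := by
        simp only [hdd, ← hc, dif_pos hQj]
      have hddi : dd i n = ((D n (i * c) : ↥(Λ n)) : Γ) := by
        simp only [hdd, ← hc, dif_pos hQi]
      -- pull back to ↥(Λ n)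
      rw [hddj, hddi, SG_eq_image, ← image_pow] at hn1
      obtain ⟨y, hy, hyeq⟩ := hn1
      have hyval : y = (D n (i * c))⁻¹ * D n (j * c) := by
        apply Subtype.ext
        simpa using hyeq
      rw [hyval] at hy
      -- length bounds give a contradiction
      have hDj : D n (j * c) ∈ wordSet w ↥(Λ n) ^ (i * c + r + m) := by
        have h1 : D n (i * c) * ((D n (i * c))⁻¹ * D n (j * c)) ∈
            wordSet w ↥(Λ n) ^ (i * c + r) * wordSet w ↥(Λ n) ^ m :=
          Set.mul_mem_mul (hD2 n _ hQi) hy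
        rwa [mul_inv_cancel_left, ← pow_add] at h1
      refine hD3 n (j * c) hQj (i * c + r + m) ?_ hDj
      have h1 : (i + 1) * c ≤ j * c := Nat.mul_le_mul_right c (by omega)
      have h2 : m + 2 * r + 2 ≤ c := by omega
      calc i * c + r + m + r < i * c + c := by omega
      _ ≤ j * c := by rw [add_mul] at h1; omega
    -- infinitely many cosets
    have hDDmem : ∀ j, (Filter.Germ.ofFun (dd j) : (𝒩 : Filter ℕ).Germ Γ) ∈
        ultraSubgroup 𝒩 Δ := fun j =>
      ⟨dd j, Filter.Eventually.of_forall (fun n => hddΔ j n), rfl⟩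
    set V := (verbalIn w (ultraSubgroup 𝒩 Λ)).subgroupOf (ultraSubgroup 𝒩 Δ) with hV
    have hinj : Function.Injective
        (fun j : ℕ => (QuotientGroup.mk (⟨Filter.Germ.ofFun (dd j), hDDmem j⟩ :
          ↥(ultraSubgroup 𝒩 Δ)) : ↥(ultraSubgroup 𝒩 Δ) ⧸ V)) := by
      intro i j hq
      by_contra hne
      rcases lt_trichotomy i j with h | h | h
      · have := QuotientGroup.eq.1 hq
        rw [hV, Subgroup.mem_subgroupOf] at this
        exact hsep i j h (by simpa using this)
      · exact hne h
      · have := QuotientGroup.eq.1 hq.symm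
        rw [hV, Subgroup.mem_subgroupOf] at this
        exact hsep j i h (by simpa using this)
    have : Infinite (↥(ultraSubgroup 𝒩 Δ) ⧸ V) := Infinite.of_injective _ hinj
    rw [Subgroup.relIndex, Subgroup.index_eq_card]
    exact Nat.card_eq_zero_of_infinite
  · -- easy direction: bounded widths imply Δ* ≤ (Λ*)_w
    rintro ⟨s, hs⟩
    have hsub : ultraSubgroup 𝒩 Δ ≤ verbalIn w (ultraSubgroup 𝒩 Λ) := by
      rintro x ⟨f, hf, rfl⟩
      apply mem_verbal_of_eventually_pow w 𝒩 (m := s)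
      filter_upwards [hf, hs] with n h1 h2
      have hmem : (⟨f n, hle n h1⟩ : ↥(Λ n)) ∈ (Δ n).subgroupOf (Λ n) :=
        (Subgroup.mem_subgroupOf).2 h1
      have hm : (⟨f n, hle n h1⟩ : ↥(Λ n)) ∈ wordSet w ↥(Λ n) ^ s :=
        h2 (hΔw n hmem)
      rw [SG_eq_image, ← image_pow]
      exact ⟨_, hm, rfl⟩
    rw [Subgroup.relIndex_eq_one.2 hsub]
    exact one_ne_zero
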